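/- For the recurrence f_m = (f_{m-1}^2 + β)/f_{m-2} with f_0 = X, f_1 = Y and β a nonzero constant in a field k, every iterate f_m (m ≥ 0) is a Laurent polynomial in X and Y over k. -/

import Mathlib

open MvPolynomial

/-- For the recurrence `f m = (f (m-1)^2 + β) / f (m-2)` with
`f 0 = X`, `f 1 = Y` and `β ≠ 0`, every iterate is a Laurent polynomial in `X, Y`,
i.e. lies in the subalgebra of the rational function field `k(X,Y)` generated by
`X`, `Y`, `X⁻¹`, `Y⁻¹`. -/
theorem laurent_property_of_quadratic_recurrence
    (k : Type*) [Field k] (β : k) (hβ : β ≠ 0)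
    (x y : FractionRing (MvPolynomial (Fin 2) k))
    (hx : x = algebraMap (MvPolynomial (Fin 2) k) _ (X 0))
    (hy : y = algebraMap (MvPolynomial (Fin 2) k) _ (X 1))
    (f : ℕ → FractionRing (MvPolynomial (Fin 2) k))
    (h0 : f 0 = x) (h1 : f 1 = y)
    (hne : ∀ m, f m ≠ 0)
    (hrec : ∀ m, f (m + 2) * f m = f (m + 1) ^ 2
      + algebraMap (MvPolynomial (Fin 2) k) _ (C β)) :
    ∀ m, f m ∈ Algebra.adjoin k
      ({x, y, x⁻¹, y⁻¹} : Set (FractionRing (MvPolynomial (Fin 2) k))) := by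
  set b : FractionRing (MvPolynomial (Fin 2) k) :=
    algebraMap (MvPolynomial (Fin 2) k) _ (C β) with hbdef
  have hx0 : x ≠ 0 := h0 ▸ hne 0
  have hy0 : y ≠ 0 := h1 ▸ hne 1
  set J : FractionRing (MvPolynomial (Fin 2) k) := (x ^ 2 + y ^ 2 + b) * x⁻¹ * y⁻¹ with hJ
  -- the linearized recurrence
  have hlin : ∀ m, f (m + 2) = J * f (m + 1) - f m := by
    intro m
    induction m with
    | zero =>
      have h := hrec 0
      rw [h0, h1] at h
      rw [h0, h1, hJ]
      field_simp
      linear_combination h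
    | succ n ih =>
      have A := hrec (n + 1)
      have B := hrec n
      have := hne (n + 1)
      apply mul_right_cancel₀ (hne (n + 1))
      linear_combination A + f (n + 2) * ih - B
  set S := Algebra.adjoin k ({x, y, x⁻¹, y⁻¹} : Set (FractionRing (MvPolynomial (Fin 2) k))) with hS
  have hxS : x ∈ S := Algebra.subset_adjoin (by simp)
  have hyS : y ∈ S := Algebra.subset_adjoin (by simp)
  have hxiS : x⁻¹ ∈ S := Algebra.subset_adjoin (by simp)
  have hyiS : y⁻¹ ∈ S := Algebra.subset_adjoin (by simp)
  have hbS : b ∈ S := by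
    have : b = algebraMap k _ β := by
      rw [hbdef, IsScalarTower.algebraMap_apply k (MvPolynomial (Fin 2) k) (FractionRing (MvPolynomial (Fin 2) k))]
      simp
    rw [this]
    exact S.algebraMap_mem β
  have hJS : J ∈ S := by
    rw [hJ]
    exact mul_mem (mul_mem (add_mem (add_mem (pow_mem hxS 2) (pow_mem hyS 2)) hbS) hxiS) hyiS
  have key : ∀ m, f m ∈ S ∧ f (m + 1) ∈ S := by
    intro m
    induction m with
    | zero => exact ⟨h0 ▸ hxS, h1 ▸ hyS⟩
    | succ n ih =>
      refine ⟨ih.2, ?_⟩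
      rw [hlin n]
      exact sub_mem (mul_mem hJS ih.2) ih.1
  exact fun m => (key m).1
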